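/- arXiv:2306.03353 — 3 statements merged into one kernel-verified Lean document; each statement's English description precedes it below -/
import Mathlib

section
/- Let V be a Lorentzian vector space with inner product ⟨·,·⟩ of signature (-,+,...,+), and let T₁, T₂, T₃ be future-directed unit timelike vectors (so ⟨Tᵢ,Tᵢ⟩ = -1 and all pairwise inner products are negative). Then 1 ≤ -⟨T₁,T₂⟩ ≤ 2⟨T₁,T₃⟩⟨T₂,T₃⟩. -/
/-- The Minkowski inner product of signature `(-,+,...,+)` on `ℝ × ℝⁿ`. -/
noncomputable def minkowski (n : ℕ) (p q : ℝ × EuclideanSpace ℝ (Fin n)) : ℝ :=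
  -(p.1 * q.1) + (inner ℝ p.2 q.2 : ℝ)

lemma mink_comm (n : ℕ) (p q : ℝ × EuclideanSpace ℝ (Fin n)) :
    minkowski n p q = minkowski n q p := by
  simp [minkowski, real_inner_comm, mul_comm]

lemma mink_add_left (n : ℕ) (p q r : ℝ × EuclideanSpace ℝ (Fin n)) :
    minkowski n (p + q) r = minkowski n p r + minkowski n q r := by
  simp [minkowski, inner_add_left]; ring

lemma mink_smul_left (n : ℕ) (a : ℝ) (p q : ℝ × EuclideanSpace ℝ (Fin n)) :
    minkowski n (a • p) q = a * minkowski n p q := by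
  simp [minkowski, inner_smul_left]; ring

lemma mink_add_right (n : ℕ) (p q r : ℝ × EuclideanSpace ℝ (Fin n)) :
    minkowski n p (q + r) = minkowski n p q + minkowski n p r := by
  rw [mink_comm, mink_add_left, mink_comm n q, mink_comm n r]

lemma mink_smul_right (n : ℕ) (a : ℝ) (p q : ℝ × EuclideanSpace ℝ (Fin n)) :
    minkowski n p (a • q) = a * minkowski n p q := by
  rw [mink_comm, mink_smul_left, mink_comm]

/-- The Minkowski form is nonnegative on the orthogonal complement of a unit
timelike vector. -/
lemma mink_nonneg_orth (n : ℕ) (T X : ℝ × EuclideanSpace ℝ (Fin n))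
    (hT : minkowski n T T = -1) (hX : minkowski n T X = 0) :
    0 ≤ minkowski n X X := by
  unfold minkowski at *
  have cs : (inner ℝ T.2 X.2 : ℝ) * (inner ℝ T.2 X.2 : ℝ) ≤
      (inner ℝ T.2 T.2 : ℝ) * (inner ℝ X.2 X.2 : ℝ) := real_inner_mul_inner_self_le _ _
  have hXX : (0:ℝ) ≤ (inner ℝ X.2 X.2 : ℝ) := real_inner_self_nonneg
  have hTT : (0:ℝ) ≤ (inner ℝ T.2 T.2 : ℝ) := real_inner_self_nonneg
  have hB : (inner ℝ T.2 X.2 : ℝ) = T.1 * X.1 := by linarith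
  have hA : (inner ℝ T.2 T.2 : ℝ) = T.1 * T.1 - 1 := by linarith
  rw [hB, hA] at cs
  rw [hA] at hTT
  nlinarith [cs, hXX, hTT, sq_nonneg X.1, sq_nonneg T.1,
    mul_nonneg (mul_nonneg hTT hTT) hXX]

/-- Cauchy–Schwarz on the orthogonal complement of a unit timelike vector. -/
lemma mink_cs (n : ℕ) (T X Y : ℝ × EuclideanSpace ℝ (Fin n))
    (hT : minkowski n T T = -1) (hX : minkowski n T X = 0)
    (hY : minkowski n T Y = 0) :
    (minkowski n X Y) ^ 2 ≤ minkowski n X X * minkowski n Y Y := by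
  set a := minkowski n X X with ha
  set b := minkowski n X Y with hb
  set c := minkowski n Y Y with hc
  have key : ∀ l : ℝ, 0 ≤ c * (l * l) + (2 * b) * l + a := by
    intro l
    have horth : minkowski n T (X + l • Y) = 0 := by
      rw [mink_add_right, mink_smul_right, hX, hY]; ring
    have h0 := mink_nonneg_orth n T (X + l • Y) hT horth
    have hexp : minkowski n (X + l • Y) (X + l • Y) = c * (l * l) + (2 * b) * l + a := by
      simp only [mink_add_left, mink_add_right, mink_smul_left, mink_smul_right,
        mink_comm n Y X, ha, hb, hc]
      ring
    linarith [hexp ▸ h0]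
  have hd := discrim_le_zero key
  unfold discrim at hd
  nlinarith [hd]

/-- Bartnik's Lemma 3.3: if `T₁, T₂, T₃` are future-directed unit timelike vectors
(unit timelike, mutually in the same time cone, i.e. pairwise inner products are
negative), then `1 ≤ -⟨T₁,T₂⟩ ≤ 2⟨T₁,T₃⟩⟨T₂,T₃⟩`. -/
theorem stmt0 (n : ℕ) (T₁ T₂ T₃ : ℝ × EuclideanSpace ℝ (Fin n))
    (h1 : minkowski n T₁ T₁ = -1) (h2 : minkowski n T₂ T₂ = -1)
    (h3 : minkowski n T₃ T₃ = -1)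
    (h12 : minkowski n T₁ T₂ < 0) (h13 : minkowski n T₁ T₃ < 0)
    (h23 : minkowski n T₂ T₃ < 0) :
    1 ≤ -(minkowski n T₁ T₂) ∧
      -(minkowski n T₁ T₂) ≤ 2 * minkowski n T₁ T₃ * minkowski n T₂ T₃ := by
  -- generic "reverse Cauchy–Schwarz": u := ⟨S₁,S₂⟩ satisfies u² ≥ 1, hence u ≤ -1
  have key : ∀ S₁ S₂ : ℝ × EuclideanSpace ℝ (Fin n),
      minkowski n S₁ S₁ = -1 → minkowski n S₂ S₂ = -1 →
      minkowski n S₁ S₂ < 0 → minkowski n S₁ S₂ ≤ -1 := by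
    intro S₁ S₂ hS1 hS2 hS12
    set u := minkowski n S₁ S₂ with hu
    have horth : minkowski n S₁ (S₂ + u • S₁) = 0 := by
      rw [mink_add_right, mink_smul_right, hS1]; ring
    have h0 := mink_nonneg_orth n S₁ (S₂ + u • S₁) hS1 horth
    have hexp : minkowski n (S₂ + u • S₁) (S₂ + u • S₁) = u ^ 2 - 1 := by
      simp only [mink_add_left, mink_add_right, mink_smul_left, mink_smul_right,
        mink_comm n S₂ S₁, hS1, hS2, ← hu]
      ring
    rw [hexp] at h0
    nlinarith
  have g12 := key T₁ T₂ h1 h2 h12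
  have g13 := key T₁ T₃ h1 h3 h13
  have g23 := key T₂ T₃ h2 h3 h23
  refine ⟨by linarith, ?_⟩
  -- decompose T₁, T₂ orthogonally to T₃
  set u12 := minkowski n T₁ T₂ with hu12
  set u13 := minkowski n T₁ T₃ with hu13
  set u23 := minkowski n T₂ T₃ with hu23
  have hX1 : minkowski n T₃ (T₁ + u13 • T₃) = 0 := by
    rw [mink_add_right, mink_smul_right, h3, mink_comm n T₃ T₁]; ring
  have hX2 : minkowski n T₃ (T₂ + u23 • T₃) = 0 := by
    rw [mink_add_right, mink_smul_right, h3, mink_comm n T₃ T₂]; ring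
  have cs := mink_cs n T₃ (T₁ + u13 • T₃) (T₂ + u23 • T₃) h3 hX1 hX2
  have e1 : minkowski n (T₁ + u13 • T₃) (T₂ + u23 • T₃) = u12 + u13 * u23 := by
    simp only [mink_add_left, mink_add_right, mink_smul_left, mink_smul_right,
      mink_comm n T₃ T₂, h3, ← hu12, ← hu13, ← hu23]
    ring
  have e2 : minkowski n (T₁ + u13 • T₃) (T₁ + u13 • T₃) = u13 ^ 2 - 1 := by
    simp only [mink_add_left, mink_add_right, mink_smul_left, mink_smul_right,
      mink_comm n T₃ T₁, h1, h3, ← hu13]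
    ring
  have e3 : minkowski n (T₂ + u23 • T₃) (T₂ + u23 • T₃) = u23 ^ 2 - 1 := by
    simp only [mink_add_left, mink_add_right, mink_smul_left, mink_smul_right,
      mink_comm n T₃ T₂, h2, h3, ← hu23]
    ring
  rw [e1, e2, e3] at cs
  nlinarith [cs, sq_nonneg (u12 + u13 * u23), mul_pos (neg_pos.2 h13) (neg_pos.2 h23)]
end

section
/- Let h = 1-2ms with 0 < s < 1/(2m), and suppose Q: S² × (0,s₀) → ℝ is C¹ and satisfies (for all small s) the two inequalities: (i) -(1+O(s²))Q_s - (ε+O(s²))|∇Q|²_{S²} ≤ C₇(ε) for ε = 1/8, and (ii) (2+O(s³))Q_s + (s²h+O(s³))Q_s² + (1+O(s³))|∇Q|²_{S²} ≤ C₈. Then there exist s₁ > 0 and C₉ > 0 such that |Q_s| ≤ C₉ and |∇Q|²_{S²} ≤ C₉ on S² × (0,s₁); i.e., Q is uniformly Lipschitz near s = 0. -/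
set_option maxHeartbeats 1600000 in
/-- The analytic core of the Lipschitz regularity theorem (Theorem 5.1 of the
paper).  Here `Qs y s` stands for `∂_sQ(y,s)` and `G y s` for `|∇Q|²_{S²}(y,s)
≥ 0` for a `C¹` function `Q` on `S² × (0,s₀)`, `h = 1-2ms`, and `e₁,…,e₅` are
the `O(s²)` resp. `O(s³)` error terms.  Assume, for all `y ∈ S²`, `0 < s < s₀`:
(i)  `-(1+e₁)Q_s - (1/8+e₂)|∇Q|² ≤ C₇`  with `|e₁|,|e₂| ≤ Ks²`, and
(ii) `(2+e₃)Q_s + (s²h+e₄)Q_s² + (1+e₅)|∇Q|² ≤ C₈`  with `|e₃|,|e₄|,|e₅| ≤ Ks³`.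
Then there are `s₁ > 0`, `C₉ > 0` with `|Q_s| ≤ C₉` and `|∇Q|² ≤ C₉` on
`S² × (0,s₁)`; i.e. `Q` is uniformly Lipschitz near `s = 0`. -/
theorem stmt14 (m s₀ K C₇ C₈ : ℝ) (hm : 0 < m) (hs₀ : 0 < s₀) (hK : 0 ≤ K)
    (Qs G : (Metric.sphere (0 : EuclideanSpace ℝ (Fin 3)) 1) → ℝ → ℝ)
    (hG : ∀ y s, 0 ≤ G y s)
    (e₁ e₂ e₃ e₄ e₅ : (Metric.sphere (0 : EuclideanSpace ℝ (Fin 3)) 1) → ℝ → ℝ)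
    (hbd1 : ∀ y s, 0 < s → s < s₀ → |e₁ y s| ≤ K * s^2 ∧ |e₂ y s| ≤ K * s^2)
    (hbd2 : ∀ y s, 0 < s → s < s₀ →
      |e₃ y s| ≤ K * s^3 ∧ |e₄ y s| ≤ K * s^3 ∧ |e₅ y s| ≤ K * s^3)
    (hi : ∀ y s, 0 < s → s < s₀ →
      -((1 + e₁ y s) * Qs y s) - (1/8 + e₂ y s) * G y s ≤ C₇)
    (hii : ∀ y s, 0 < s → s < s₀ →
      (2 + e₃ y s) * Qs y s + (s^2 * (1 - 2*m*s) + e₄ y s) * (Qs y s)^2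
        + (1 + e₅ y s) * G y s ≤ C₈) :
    ∃ s₁ > (0:ℝ), ∃ C₉ > (0:ℝ), ∀ y s, 0 < s → s < s₁ →
      |Qs y s| ≤ C₉ ∧ G y s ≤ C₉ := by
  refine ⟨min s₀ (min (1/(2*m+K+1)) (1/(100*(K+1)))), ?_, 40*(|C₇|+|C₈|)+40, by positivity, ?_⟩
  · have h1 : 0 < 2*m+K+1 := by linarith
    have h2 : 0 < 100*(K+1) := by linarith
    positivity
  intro y s hs hs1
  have hs0 : s < s₀ := lt_of_lt_of_le hs1 (min_le_left _ _)
  have hsa : s < 1/(2*m+K+1) := lt_of_lt_of_le hs1 ((min_le_right _ _).trans (min_le_left _ _))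
  have hsb : s < 1/(100*(K+1)) := lt_of_lt_of_le hs1 ((min_le_right _ _).trans (min_le_right _ _))
  have hmK : (0:ℝ) < 2*m+K+1 := by linarith
  have hK1 : (0:ℝ) < 100*(K+1) := by linarith
  have hsmK : (2*m+K+1)*s < 1 := by
    have := (lt_div_iff₀' hmK).mp hsa; linarith
  have hsK1 : (100*(K+1))*s < 1 := by
    have := (lt_div_iff₀' hK1).mp hsb; linarith
  have hslt1 : s < 1 := by nlinarith
  have hKs : K*s ≤ 1/100 := by nlinarith
  have hKs2 : K*s^2 ≤ 1/100 := by nlinarith [sq_nonneg s]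
  have hKs3 : K*s^3 ≤ 1/100 := by nlinarith [sq_nonneg s, mul_nonneg (mul_nonneg hK hs.le) hs.le]
  obtain ⟨he1, he2⟩ := hbd1 y s hs hs0
  obtain ⟨he3, he4, he5⟩ := hbd2 y s hs hs0
  rw [abs_le] at he1 he2 he3 he4 he5
  have E1a : -(1/100) ≤ e₁ y s := le_trans (by linarith) he1.1
  have E1b : e₁ y s ≤ 1/100 := le_trans he1.2 hKs2
  have E2a : -(1/100) ≤ e₂ y s := le_trans (by linarith) he2.1
  have E2b : e₂ y s ≤ 1/100 := le_trans he2.2 hKs2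
  have E3a : -(1/100) ≤ e₃ y s := le_trans (by linarith) he3.1
  have E3b : e₃ y s ≤ 1/100 := le_trans he3.2 hKs3
  have E4a : -(K*s^3) ≤ e₄ y s := he4.1
  have E5a : -(1/100) ≤ e₅ y s := le_trans (by linarith) he5.1
  have E5b : e₅ y s ≤ 1/100 := le_trans he5.2 hKs3
  set x := Qs y s with hx
  set g := G y s with hg
  have hg0 : 0 ≤ g := hG y s
  have hc : 0 ≤ s^2*(1 - 2*m*s) + e₄ y s := by
    have : K*s^3 ≤ s^2*(1-2*m*s) := by nlinarith [sq_nonneg s]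
    linarith
  have ineq2 : (2 + e₃ y s) * x + (1 + e₅ y s) * g ≤ C₈ := by
    have h := hii y s hs hs0
    have hq := mul_nonneg hc (sq_nonneg x)
    linarith
  have ineq1 : -((1 + e₁ y s) * x) - (1/8 + e₂ y s) * g ≤ C₇ := hi y s hs hs0
  have hC7 : C₇ ≤ |C₇| := le_abs_self C₇
  have hC8 : C₈ ≤ |C₈| := le_abs_self C₈
  have habs7 : 0 ≤ |C₇| := abs_nonneg _
  have habs8 : 0 ≤ |C₈| := abs_nonneg _
  -- lower bound for x
  have p5a : (-(1/100))*g ≤ e₅ y s * g := mul_le_mul_of_nonneg_right E5a hg0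
  have p5b : e₅ y s * g ≤ (1/100)*g := mul_le_mul_of_nonneg_right E5b hg0
  have p2b : e₂ y s * g ≤ (1/100)*g := mul_le_mul_of_nonneg_right E2b hg0
  have p2a : (-(1/100))*g ≤ e₂ y s * g := mul_le_mul_of_nonneg_right E2a hg0
  have hxlow : -(4*(|C₇|+|C₈|)+4) ≤ x := by
    rcases le_or_gt 0 x with h | h
    · linarith only [h, habs7, habs8]
    · have p3 : e₃ y s * x ≥ (1/100)*x := mul_le_mul_of_nonpos_right E3b h.le
      have p1 : e₁ y s * x ≥ (1/100)*x := mul_le_mul_of_nonpos_right E1b h.le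
      have p1' : e₁ y s * x ≤ (-(1/100))*x := mul_le_mul_of_nonpos_right E1a h.le
      have p3' : e₃ y s * x ≤ (-(1/100))*x := mul_le_mul_of_nonpos_right E3a h.le
      linarith only [ineq1, ineq2, p3, p1, p1', p3', p2b, p5a, hg0, hC7, hC8, habs7, habs8]
  -- upper bound for x
  have hxup : x ≤ 4*(|C₇|+|C₈|)+4 := by
    rcases le_or_gt 0 x with h | h
    · have p3 : (-(1/100))*x ≤ e₃ y s * x := mul_le_mul_of_nonneg_right E3a h
      linarith only [ineq2, p3, p5a, hg0, hC8, habs7, habs8, h]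
    · linarith only [h, habs7, habs8]
  -- bound for g
  have hgup : g ≤ 40*(|C₇|+|C₈|)+40 := by
    have h2e3 : (0:ℝ) ≤ 2 + e₃ y s := by linarith
    have q1 : (2 + e₃ y s)*(-(4*(|C₇|+|C₈|)+4)) ≤ (2 + e₃ y s)*x :=
      mul_le_mul_of_nonneg_left hxlow h2e3
    have hB : (0:ℝ) ≤ 4*(|C₇|+|C₈|)+4 := by positivity
    have q2 : e₃ y s * (4*(|C₇|+|C₈|)+4) ≤ (1/100)*(4*(|C₇|+|C₈|)+4) :=
      mul_le_mul_of_nonneg_right E3b hB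
    linarith only [q1, q2, ineq2, p5a, hC8, habs7, habs8, hg0]
  refine ⟨abs_le.mpr ⟨by linarith, by linarith⟩, hgup⟩
end

section
/- In the asymptotically Schwarzschild setting with metric G = ω^{-2}(ḡ + p), ω = s(1+O(s³)), p_{ab} = O(s³), and coordinates t = v + r_*, x^i (spherical), the ∂/∂t direction is timelike for s small, the lapse of the time function t satisfies α̃ = 1 + O(s), the shift covector satisfies β_i = O(s), and the induced metric on slices t = constant satisfies G_{ij} = δ_{ij} + O(s). -/
open Matrix

private lemma abs_mul4_le {p q r w P Q R W : ℝ} (hp : |p| ≤ P) (hq : |q| ≤ Q)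
    (hr : |r| ≤ R) (hw : |w| ≤ W) : |p*q*(r*w)| ≤ P*Q*(R*W) := by
  have hP : 0 ≤ P := (abs_nonneg _).trans hp
  have hQ : 0 ≤ Q := (abs_nonneg _).trans hq
  have hR : 0 ≤ R := (abs_nonneg _).trans hr
  rw [abs_mul, abs_mul, abs_mul]
  gcongr <;> first
    | exact mul_nonneg hP hQ
    | exact hP
    | exact hQ
    | exact hR
    | exact hp
    | exact hq
    | exact hr
    | exact hw

private lemma abs_mul_le {x y X Y : ℝ} (hx : |x| ≤ X) (hy : |y| ≤ Y) : |x*y| ≤ X*Y := by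
  rw [abs_mul]
  exact mul_le_mul hx hy (abs_nonneg _) ((abs_nonneg _).trans hx)

private lemma abs_prod4_sub {x1 x2 x3 x4 y1 y2 y3 y4 a e : ℝ}
    (ha : 0 ≤ a) (he : 0 ≤ e)
    (h1 : |x1| ≤ a) (h2 : |x2| ≤ a) (h3 : |x3| ≤ a) (h4 : |x4| ≤ a)
    (d1 : |y1 - x1| ≤ e) (d2 : |y2 - x2| ≤ e) (d3 : |y3 - x3| ≤ e) (d4 : |y4 - x4| ≤ e) :
    |y1*y2*(y3*y4) - x1*x2*(x3*x4)| ≤ 4*e*(a+e)^3 := by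
  have hy2 : |y2| ≤ a + e := by
    calc |y2| = |x2 + (y2 - x2)| := by ring_nf
    _ ≤ |x2| + |y2 - x2| := abs_add_le _ _
    _ ≤ a + e := add_le_add h2 d2
  have hy3 : |y3| ≤ a + e := by
    calc |y3| = |x3 + (y3 - x3)| := by ring_nf
    _ ≤ |x3| + |y3 - x3| := abs_add_le _ _
    _ ≤ a + e := add_le_add h3 d3
  have hy4 : |y4| ≤ a + e := by
    calc |y4| = |x4 + (y4 - x4)| := by ring_nf
    _ ≤ |x4| + |y4 - x4| := abs_add_le _ _
    _ ≤ a + e := add_le_add h4 d4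
  have hx1 : |x1| ≤ a + e := h1.trans (by linarith)
  have hx2 : |x2| ≤ a + e := h2.trans (by linarith)
  have hx3 : |x3| ≤ a + e := h3.trans (by linarith)
  have key : y1*y2*(y3*y4) - x1*x2*(x3*x4)
      = (y1-x1)*y2*(y3*y4) + x1*(y2-x2)*(y3*y4) + (x1*x2*((y3-x3)*y4) + x1*x2*(x3*(y4-x4))) := by
    ring
  rw [key]
  have T1 : |(y1-x1)*y2*(y3*y4)| ≤ e*(a+e)*((a+e)*(a+e)) := abs_mul4_le d1 hy2 hy3 hy4
  have T2 : |x1*(y2-x2)*(y3*y4)| ≤ (a+e)*e*((a+e)*(a+e)) := abs_mul4_le hx1 d2 hy3 hy4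
  have T3 : |x1*x2*((y3-x3)*y4)| ≤ (a+e)*(a+e)*(e*(a+e)) := abs_mul4_le hx1 hx2 d3 hy4
  have T4 : |x1*x2*(x3*(y4-x4))| ≤ (a+e)*(a+e)*((a+e)*e) := abs_mul4_le hx1 hx2 hx3 d4
  calc |(y1-x1)*y2*(y3*y4) + x1*(y2-x2)*(y3*y4) + (x1*x2*((y3-x3)*y4) + x1*x2*(x3*(y4-x4)))|
      ≤ |(y1-x1)*y2*(y3*y4) + x1*(y2-x2)*(y3*y4)| + |x1*x2*((y3-x3)*y4) + x1*x2*(x3*(y4-x4))| :=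
        abs_add_le _ _
    _ ≤ (|(y1-x1)*y2*(y3*y4)| + |x1*(y2-x2)*(y3*y4)|) + (|x1*x2*((y3-x3)*y4)| + |x1*x2*(x3*(y4-x4))|) :=
        add_le_add (abs_add_le _ _) (abs_add_le _ _)
    _ ≤ (e*(a+e)*((a+e)*(a+e)) + (a+e)*e*((a+e)*(a+e))) + ((a+e)*(a+e)*(e*(a+e)) + (a+e)*(a+e)*((a+e)*e)) := by
        exact add_le_add (add_le_add T1 T2) (add_le_add T3 T4)
    _ = 4*e*(a+e)^3 := by ring

private lemma det_pert' (A E : Matrix (Fin 2 ⊕ Fin 2) (Fin 2 ⊕ Fin 2) ℝ) (a e : ℝ)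
    (ha : 0 ≤ a) (he : 0 ≤ e) (hA : ∀ i j, |A i j| ≤ a) (hE : ∀ i j, |E i j| ≤ e) :
    |(A + E).det - A.det| ≤ 96 * e * (a+e)^3 := by
  have hprod : ∀ f : (Fin 2 ⊕ Fin 2) → ℝ, ∏ i, f i = f (Sum.inl 0) * f (Sum.inl 1) * (f (Sum.inr 0) * f (Sum.inr 1)) := by
    intro f
    rw [Fintype.prod_sum_type]
    simp [Fin.prod_univ_two]
  rw [Matrix.det_apply, Matrix.det_apply, ← Finset.sum_sub_distrib]
  refine (Finset.abs_sum_le_sum_abs _ _).trans ?_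
  have hcard : (Finset.univ : Finset (Equiv.Perm (Fin 2 ⊕ Fin 2))).card = 24 := by
    rw [Finset.card_univ, Fintype.card_perm, Fintype.card_sum, Fintype.card_fin]
    decide
  refine le_trans (Finset.sum_le_card_nsmul _ _ (4*e*(a+e)^3) ?_) ?_
  · intro σ _
    rw [← smul_sub]
    have habs : |Equiv.Perm.sign σ • ((∏ i, (A+E) (σ i) i) - (∏ i, A (σ i) i))|
        = |(∏ i, (A+E) (σ i) i) - (∏ i, A (σ i) i)| := by
      rcases Int.units_eq_one_or (Equiv.Perm.sign σ) with h | h <;> rw [h]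
      · rw [one_smul]
      · rw [Units.smul_def, Units.val_neg, Units.val_one, neg_smul, one_smul, abs_neg]
    rw [habs, hprod, hprod]
    refine abs_prod4_sub ha he (hA _ _) (hA _ _) (hA _ _) (hA _ _) ?_ ?_ ?_ ?_ <;>
      · simp only [Matrix.add_apply, add_sub_cancel_left]
        exact hE _ _
  · rw [hcard, nsmul_eq_mul]
    norm_num
    ring_nf
    exact le_rfl

private lemma inv_sqrt_close {A : ℝ} (h1 : 1/2 ≤ A) (h2 : A ≤ 3/2) :
    |(Real.sqrt A)⁻¹ - 1| ≤ |A - 1| := by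
  have hA : 0 < A := by linarith
  have ht2 : Real.sqrt A ^ 2 = A := Real.sq_sqrt hA.le
  set t := Real.sqrt A with ht
  have htpos : 0 < t := Real.sqrt_pos.mpr hA
  have ht7 : 0.7 ≤ t := by nlinarith [Real.sqrt_nonneg A]
  have hrw : t⁻¹ - 1 = (1 - t)/t := by field_simp
  rw [hrw, abs_div, abs_of_pos htpos, div_le_iff₀ htpos]
  have hA1 : |A - 1| = |1 - t| * (1 + t) := by
    have : A - 1 = -((1-t)*(1+t)) := by nlinarith
    rw [this, abs_neg, abs_mul, abs_of_pos (show (0:ℝ) < 1 + t by linarith)]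
  rw [hA1]
  nlinarith [abs_nonneg (1 - t)]

private lemma sum4 (f : (Fin 2 ⊕ Fin 2) → ℝ) :
    ∑ x, f x = f (Sum.inl 0) + f (Sum.inl 1) + (f (Sum.inr 0) + f (Sum.inr 1)) := by
  rw [Fintype.sum_sum_type]
  simp [Fin.sum_univ_two]

private lemma det_update_blocks (σ L : Matrix (Fin 2) (Fin 2) ℝ) (b a : Fin 2) :
    ((Matrix.fromBlocks σ 0 0 L).updateRow (Sum.inr b) (Pi.single (Sum.inr a) 1)).det
      = σ.det * (L.updateRow b (Pi.single a 1)).det := by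
  have h1 : (Pi.single (Sum.inr a) (1:ℝ) : Fin 2 ⊕ Fin 2 → ℝ)
      = Sum.elim (0 : Fin 2 → ℝ) (Pi.single a 1) := by
    funext x
    rcases x with x | x <;> simp [Pi.single_apply]
  rw [h1]
  have h2 : (Matrix.fromBlocks σ 0 0 L).updateRow (Sum.inr b) (Sum.elim (0 : Fin 2 → ℝ) (Pi.single a 1))
      = Matrix.fromBlocks σ 0 0 (L.updateRow b (Pi.single a 1)) := by
    ext i j
    rcases i with i | i <;> rcases j with j | j <;>
      simp [Matrix.updateRow_apply, Sum.inr.injEq, Pi.single_apply]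
  rw [h2, Matrix.det_fromBlocks_zero₂₁]
set_option maxHeartbeats 3200000 in
/-- Lemma 5.2 of the paper (pointwise, in the coordinate frame
`(∂_{y¹},∂_{y²},∂_s,∂_v)` indexed by `Fin 2 ⊕ Fin 2`).  For the asymptotically
Schwarzschild metric `G = ω⁻²(ḡ + p)` with `ω = s(1+O(s³))` and `p = O(s³)`,
in the coordinates `t = v + r_*`, `x^i` (so `∂_t = ∂_v`,
`∂_{x^i} = (x^i/r)(-h⁻¹∂_v - s²∂_s) + (∂y^A/∂x^i)∂_{y^A}` with
`∂y^A/∂x^i = O(s)`, `dt = dv - s⁻²h⁻¹ds`):  `∂_t` is timelike for small `s`;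
the lapse `α̃ = (-G(∇t,∇t))^{-1/2}` of the time function `t` satisfies
`α̃ = 1+O(s)`; the shift satisfies `β_i = G(∂_t,∂_{x^i}) = O(s)`; and the
induced metric on the slices satisfies `G_{ij} = δ_{ij} + O(s)`. -/
theorem stmt16 (m K : ℝ) (hm : 0 < m) (hK : 0 ≤ K)
    (σ : Matrix (Fin 2) (Fin 2) ℝ) (hσ : σ.PosDef)
    (p : ℝ → Matrix (Fin 2 ⊕ Fin 2) (Fin 2 ⊕ Fin 2) ℝ)
    (hp : ∀ s a b, |p s a b| ≤ K * s^3)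
    (ω : ℝ → ℝ) (hω : ∀ s, |ω s - s| ≤ K * s^4)
    (c : ℝ → Fin 3 → Fin 2 → ℝ) (hc : ∀ s i A, |c s i A| ≤ K * s)
    (xhat : Fin 3 → ℝ) (hxhat : ∑ i, xhat i ^ 2 = 1)
    (hchart : ∀ s i j, 0 < s →
      (∑ A, ∑ B, σ A B * c s i A * c s j B) * (s⁻¹)^2 + xhat i * xhat j
        = if i = j then 1 else 0)
    (gbar : ℝ → Matrix (Fin 2 ⊕ Fin 2) (Fin 2 ⊕ Fin 2) ℝ)
    (hgbar : ∀ s, gbar s = Matrix.fromBlocks σ 0 0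
      !![0, 1; 1, -(s^2 * (1 - 2*m*s))])
    (G : ℝ → Matrix (Fin 2 ⊕ Fin 2) (Fin 2 ⊕ Fin 2) ℝ)
    (hG : ∀ s, G s = ((ω s)^2)⁻¹ • (gbar s + p s))
    (X : ℝ → Fin 3 → (Fin 2 ⊕ Fin 2) → ℝ)
    (hX : ∀ s i, X s i = Sum.elim (fun A => c s i A)
      ![-(xhat i) * s^2, -(xhat i) * (1 - 2*m*s)⁻¹])
    (et : (Fin 2 ⊕ Fin 2) → ℝ) (het : et = Sum.elim (0 : Fin 2 → ℝ) ![0, 1])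
    (dt : ℝ → (Fin 2 ⊕ Fin 2) → ℝ)
    (hdt : ∀ s, dt s = Sum.elim (0 : Fin 2 → ℝ)
      ![-((s⁻¹)^2 * (1 - 2*m*s)⁻¹), 1]) :
    ∃ s₀ > (0:ℝ), ∃ C > (0:ℝ), ∀ s, 0 < s → s < s₀ →
      (∑ a, ∑ b, G s a b * et a * et b) < 0 ∧
      |(Real.sqrt (-(∑ a, ∑ b, (G s)⁻¹ a b * dt s a * dt s b)))⁻¹ - 1| ≤ C * s ∧
      (∀ i, |∑ a, ∑ b, G s a b * et a * X s i b| ≤ C * s) ∧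
      (∀ i j, |(∑ a, ∑ b, G s a b * X s i a * X s j b)
          - (if i = j then 1 else 0)| ≤ C * s) := by
  have hd : 0 < σ.det := hσ.det_pos
  have habs00 : 0 ≤ |σ 0 0| := abs_nonneg _
  have habs01 : 0 ≤ |σ 0 1| := abs_nonneg _
  have habs10 : 0 ≤ |σ 1 0| := abs_nonneg _
  have habs11 : 0 ≤ |σ 1 1| := abs_nonneg _
  obtain ⟨B, hBdef⟩ : ∃ x : ℝ, x = |σ 0 0| + |σ 0 1| + |σ 1 0| + |σ 1 1| + K + 2 :=
    ⟨_, rfl⟩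
  have hB2 : 2 ≤ B := by
    rw [hBdef]
    linarith only [habs00, habs01, habs10, habs11, hK]
  have hB0 : 0 ≤ B := by linarith only [hB2]
  have hKB : K ≤ B := by
    rw [hBdef]
    linarith only [habs00, habs01, habs10, habs11]
  have hσB : ∀ a b : Fin 2, |σ a b| ≤ B := by
    intro a b
    fin_cases a <;> fin_cases b <;>
      simp only [hBdef, Fin.mk_zero, Fin.mk_one, Fin.isValue] <;>
      linarith only [habs00, habs01, habs10, habs11, hK]
  obtain ⟨C₁, hC₁def⟩ : ∃ x : ℝ, x = 768 * B^4 := ⟨_, rfl⟩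
  have hB4 : 0 < B^4 := by positivity
  have hC₁ : 0 < C₁ := by
    rw [hC₁def]
    nlinarith only [hB4]
  obtain ⟨C₂, hC₂def⟩ : ∃ x : ℝ, x = 37*C₁ + σ.det*(4*m+6*K) := ⟨_, rfl⟩
  have hmK : 0 < σ.det*(4*m+6*K) := mul_pos hd (by linarith only [hm, hK])
  have hC₂ : 0 < C₂ := by
    rw [hC₂def]
    linarith only [hC₁, hmK]
  obtain ⟨C₃, hC₃def⟩ : ∃ x : ℝ, x = 2*C₂/σ.det := ⟨_, rfl⟩
  have hC₃ : 0 < C₃ := by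
    rw [hC₃def]
    exact div_pos (by linarith only [hC₂]) hd
  obtain ⟨C₄, hC₄def⟩ : ∃ x : ℝ, x = 12*K + 16*m + 64*K*(K+2)^2 + 1 := ⟨_, rfl⟩
  have hC₄ : 0 < C₄ := by
    have h1 : 0 ≤ 64*K*(K+2)^2 := by positivity
    rw [hC₄def]
    linarith only [h1, hK, hm]
  obtain ⟨C₅, hC₅def⟩ : ∃ x : ℝ, x = 4*K*(2*K+3) + 1 := ⟨_, rfl⟩
  have hC₅ : 0 < C₅ := by
    have h1 : 0 ≤ 4*K*(2*K+3) := by positivity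
    rw [hC₅def]
    linarith only [h1]
  have hq1 : 0 ≤ 2*C₁/σ.det := div_nonneg (by linarith only [hC₁]) hd.le
  obtain ⟨Pc, hPcdef⟩ : ∃ x : ℝ, x = 1 + 4*m + 4*K + 2*C₁/σ.det + 2*C₃ := ⟨_, rfl⟩
  have hPc1 : 1 ≤ Pc := by
    rw [hPcdef]
    linarith only [hm, hK, hq1, hC₃]
  have hPcpos : 0 < Pc := by linarith only [hPc1]
  refine ⟨Pc⁻¹, by positivity, C₃ + C₄ + C₅ + 1, by linarith only [hC₃, hC₄, hC₅], ?_⟩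
  intro s hs hss
  have hsne : s ≠ 0 := ne_of_gt hs
  -- basic smallness facts
  have hsP : Pc * s < 1 := by
    have h1 := mul_lt_mul_of_pos_left hss hPcpos
    rwa [mul_inv_cancel₀ (ne_of_gt hPcpos)] at h1
  have hs1 : s < 1 := by
    have h1 := mul_le_mul_of_nonneg_right hPc1 hs.le
    rw [one_mul] at h1
    linarith only [h1, hsP]
  have hs1' : s ≤ 1 := le_of_lt hs1
  have hs2le : s^2 ≤ s := by
    nlinarith only [mul_nonneg hs.le (sub_nonneg.mpr hs1')]
  have hs3le2 : s^3 ≤ s^2 := by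
    nlinarith only [mul_nonneg (mul_nonneg hs.le hs.le) (sub_nonneg.mpr hs1')]
  have hs3le : s^3 ≤ s := by linarith only [hs2le, hs3le2]
  have hms : 4*m*s < 1 := by
    have h1 : 4*m ≤ Pc := by
      rw [hPcdef]
      linarith only [hK, hq1, hC₃]
    nlinarith only [mul_le_mul_of_nonneg_right h1 hs.le, hsP]
  have hKs : 4*K*s < 1 := by
    have h1 : 4*K ≤ Pc := by
      rw [hPcdef]
      linarith only [hm, hq1, hC₃]
    nlinarith only [mul_le_mul_of_nonneg_right h1 hs.le, hsP]
  have hC1s : C₁ * s < σ.det/2 := by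
    have h1 : 2*C₁/σ.det ≤ Pc := by
      rw [hPcdef]
      linarith only [hm, hK, hC₃]
    have h2 : (2*C₁/σ.det)*s < 1 := by
      nlinarith only [mul_le_mul_of_nonneg_right h1 hs.le, hsP]
    have h3 := mul_lt_mul_of_pos_left h2 (half_pos hd)
    have h4 : (σ.det/2)*((2*C₁/σ.det)*s) = C₁*s := by
      field_simp
    rw [h4, mul_one] at h3
    exact h3
  have hC3s : C₃*s ≤ 1/2 := by
    have h1 : 2*C₃ ≤ Pc := by
      rw [hPcdef]
      linarith only [hm, hK, hq1]
    nlinarith only [mul_le_mul_of_nonneg_right h1 hs.le, hsP]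
  -- h = 1 - 2 m s facts
  have hh2 : 1/2 < 1 - 2*m*s := by linarith only [hms]
  have hhpos : 0 < 1 - 2*m*s := by linarith only [hh2]
  have hhne : (1 - 2*m*s) ≠ 0 := ne_of_gt hhpos
  have hhle1 : 1 - 2*m*s ≤ 1 := by nlinarith only [hm, hs]
  have hivle : (1 - 2*m*s)⁻¹ ≤ 2 := by
    rw [inv_eq_one_div, div_le_iff₀ hhpos]
    linarith only [hh2]
  have hiv1 : 1 ≤ (1 - 2*m*s)⁻¹ := by
    rw [inv_eq_one_div, le_div_iff₀ hhpos]
    linarith only [hhle1]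
  have hivpos : 0 < (1 - 2*m*s)⁻¹ := inv_pos.mpr hhpos
  -- omega facts
  have hωs := hω s
  have hKs4 : K*s^4 ≤ s/4 := by
    nlinarith only [mul_le_mul_of_nonneg_right (show K*s ≤ 1/4 by linarith only [hKs])
      (show (0:ℝ) ≤ s^3 by positivity), hs3le, hs]
  have hωlow : s/2 ≤ ω s := by
    have h1 := (abs_le.mp hωs).1
    linarith only [h1, hKs4, hs]
  have hωhigh : ω s ≤ 2*s := by
    have h1 := (abs_le.mp hωs).2
    linarith only [h1, hKs4, hs]
  have hωpos : 0 < ω s := lt_of_lt_of_le (by positivity) hωlow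
  have hωne : ω s ≠ 0 := ne_of_gt hωpos
  have hω2pos : 0 < (ω s)^2 := pow_pos hωpos 2
  have hω2ne : (ω s)^2 ≠ 0 := ne_of_gt hω2pos
  have hω2low : s^2/4 ≤ (ω s)^2 := by
    have h1 := pow_le_pow_left₀ (show (0:ℝ) ≤ s/2 by positivity) hωlow 2
    nlinarith only [h1]
  have hω2high : (ω s)^2 ≤ 4*s^2 := by
    have h1 := pow_le_pow_left₀ hωpos.le hωhigh 2
    nlinarith only [h1]
  have hW : ((ω s)^2)⁻¹ ≤ 4/s^2 := by
    rw [inv_eq_one_div, div_le_div_iff₀ hω2pos (by positivity)]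
    nlinarith only [hω2low]
  have hWpos : 0 < ((ω s)^2)⁻¹ := inv_pos.mpr hω2pos
  have hω2diff : |(ω s)^2 - s^2| ≤ 3*K*s^5 := by
    have h1 : (ω s)^2 - s^2 = (ω s - s)*(ω s + s) := by ring
    rw [h1, abs_mul]
    have h2 : |ω s + s| ≤ 3*s := by
      rw [abs_of_pos (by linarith only [hωpos, hs])]
      linarith only [hωhigh]
    calc |ω s - s| * |ω s + s| ≤ (K*s^4) * (3*s) :=
          mul_le_mul hωs h2 (abs_nonneg _) (by positivity)
      _ = 3*K*s^5 := by ring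
  -- entry bounds for gbar
  have hshB : |(-(s^2*(1-2*m*s)))| ≤ B := by
    rw [abs_neg, abs_of_nonneg (by nlinarith only [hs, hhpos])]
    nlinarith only [hs2le, hs1', hhle1, hhpos, hB2, hs]
  have hshB' : |s^2*(1-2*m*s)| ≤ B := by
    rw [← abs_neg]
    exact hshB
  have hLB : ∀ a b : Fin 2, |(!![0,(1:ℝ);1,-(s^2*(1-2*m*s))]) a b| ≤ B := by
    intro a b
    fin_cases a <;> fin_cases b <;> simp <;>
      first
        | linarith only [hB2]
        | exact hshB'
        | exact hshB
        | (rw [abs_mul, abs_of_nonneg (sq_nonneg s)] at hshB'; exact hshB')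
  have hgbB : ∀ i j, |gbar s i j| ≤ B := by
    intro i j
    rw [hgbar]
    rcases i with i | i <;> rcases j with j | j <;>
      simp only [Matrix.fromBlocks_apply₁₁, Matrix.fromBlocks_apply₁₂,
        Matrix.fromBlocks_apply₂₁, Matrix.fromBlocks_apply₂₂, Matrix.zero_apply]
    · exact hσB i j
    · rw [abs_zero]; linarith only [hB2]
    · rw [abs_zero]; linarith only [hB2]
    · exact hLB i j
  have hKs3B : K*s^3 ≤ B := by
    nlinarith only [hKB, hs3le, hs, hK, hs1',
      mul_le_mul_of_nonneg_left hs3le hK]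
  have hcube : 96*(K*s^3)*(B+K*s^3)^3 ≤ C₁*s^3 := by
    have h1 : B+K*s^3 ≤ 2*B := by linarith only [hKs3B]
    have h0 : 0 ≤ B+K*s^3 := by positivity
    have h2 : (B+K*s^3)^3 ≤ (2*B)^3 := pow_le_pow_left₀ h0 h1 3
    have h3 : 0 ≤ 96*(K*s^3) := by positivity
    calc 96*(K*s^3)*(B+K*s^3)^3 ≤ 96*(K*s^3)*(2*B)^3 :=
          mul_le_mul_of_nonneg_left h2 h3
      _ = K*(768*B^3*s^3) := by ring
      _ ≤ B*(768*B^3*s^3) := by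
          refine mul_le_mul_of_nonneg_right hKB ?_
          positivity
      _ = C₁*s^3 := by rw [hC₁def]; ring
  have hKs3 : 0 ≤ K*s^3 := by positivity
  -- determinant of gbar
  have hdetgbar : (gbar s).det = -σ.det := by
    rw [hgbar, Matrix.det_fromBlocks_zero₂₁, Matrix.det_fin_two_of]
    ring
  -- determinant of M = gbar + p
  have hdM : |(gbar s + p s).det + σ.det| ≤ C₁*s^3 := by
    have h1 := det_pert' (gbar s) (p s) B (K*s^3) hB0 hKs3 hgbB (fun i j => hp s i j)
    rw [hdetgbar] at h1
    have h2 : (gbar s + p s).det - -σ.det = (gbar s + p s).det + σ.det := by ring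
    rw [h2] at h1
    exact h1.trans hcube
  have hs3s : C₁*s^3 ≤ C₁*s := mul_le_mul_of_nonneg_left hs3le hC₁.le
  have hdMneg : (gbar s + p s).det ≤ -(σ.det/2) := by
    have h1 := (abs_le.mp hdM).2
    linarith only [h1, hs3s, hC1s]
  have hdMne : (gbar s + p s).det ≠ 0 := by
    intro h
    rw [h] at hdMneg
    linarith only [hdMneg, hd]
  have hdMabs : σ.det/2 ≤ |(gbar s + p s).det| := by
    rw [abs_of_neg (by linarith only [hdMneg, hd] : (gbar s + p s).det < 0)]
    linarith only [hdMneg]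
  have hdMinv : |((gbar s + p s).det)⁻¹| ≤ 2/σ.det := by
    rw [abs_inv, inv_eq_one_div, div_le_div_iff₀ (by linarith only [hdMabs, hd]) hd]
    linarith only [hdMabs, hd]
  -- inverse of G
  have hGs := hG s
  have hGinv : (G s)⁻¹ = ((ω s)^2 * ((gbar s + p s).det)⁻¹) • (gbar s + p s).adjugate := by
    have h1 : (G s)⁻¹ = (ω s)^2 • (gbar s + p s)⁻¹ := by
      apply Matrix.inv_eq_right_inv
      rw [hGs, Matrix.smul_mul, Matrix.mul_smul, smul_smul,
        inv_mul_cancel₀ hω2ne, one_smul,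
        Matrix.mul_nonsing_inv _ (isUnit_iff_ne_zero.mpr hdMne)]
    rw [h1, Matrix.inv_def, Ring.inverse_eq_inv, smul_smul]
  -- adjugate entry estimates
  have hFdiff : ∀ a b : Fin 2,
      |(gbar s + p s).adjugate (Sum.inr a) (Sum.inr b)
        - ((gbar s).updateRow (Sum.inr b) (Pi.single (Sum.inr a) 1)).det| ≤ C₁*s^3 := by
    intro a b
    rw [Matrix.adjugate_apply]
    have hsplit : (gbar s + p s).updateRow (Sum.inr b) (Pi.single (Sum.inr a) 1)
        = (gbar s).updateRow (Sum.inr b) (Pi.single (Sum.inr a) 1)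
          + (p s).updateRow (Sum.inr b) 0 := by
      ext i j
      by_cases hib : i = Sum.inr b <;>
        simp [Matrix.updateRow_apply, hib]
    rw [hsplit]
    refine le_trans (det_pert' _ _ B (K*s^3) hB0 hKs3 ?_ ?_) hcube
    · intro i j
      rw [Matrix.updateRow_apply]
      split
      · rcases j with j | j <;> simp only [Pi.single_apply]
        · rw [if_neg (by simp), abs_zero]
          linarith only [hB2]
        · split
          · rw [abs_one]; linarith only [hB2]
          · rw [abs_zero]; linarith only [hB2]
      · exact hgbB i j
    · intro i j
      rw [Matrix.updateRow_apply]
      split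
      · simpa using hKs3
      · exact hp s i j
  -- values of the unperturbed minors
  have hF00 : ((gbar s).updateRow (Sum.inr 0) (Pi.single (Sum.inr 0) 1)).det
      = -(s^2*(1-2*m*s)) * σ.det := by
    rw [hgbar, det_update_blocks]
    have h1 : ((!![0,(1:ℝ);1,-(s^2*(1-2*m*s))]).updateRow 0 (Pi.single (0:Fin 2) (1:ℝ))).det
        = -(s^2*(1-2*m*s)) := by
      rw [Matrix.det_fin_two]
      simp [Matrix.updateRow_apply, Pi.single_apply]
    rw [h1]; ring
  have hF01 : ((gbar s).updateRow (Sum.inr 1) (Pi.single (Sum.inr 0) 1)).det = -σ.det := by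
    rw [hgbar, det_update_blocks]
    have h1 : ((!![0,(1:ℝ);1,-(s^2*(1-2*m*s))]).updateRow 1 (Pi.single (0:Fin 2) (1:ℝ))).det
        = -1 := by
      rw [Matrix.det_fin_two]
      simp [Matrix.updateRow_apply, Pi.single_apply]
    rw [h1]; ring
  have hF10 : ((gbar s).updateRow (Sum.inr 0) (Pi.single (Sum.inr 1) 1)).det = -σ.det := by
    rw [hgbar, det_update_blocks]
    have h1 : ((!![0,(1:ℝ);1,-(s^2*(1-2*m*s))]).updateRow 0 (Pi.single (1:Fin 2) (1:ℝ))).det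
        = -1 := by
      rw [Matrix.det_fin_two]
      simp [Matrix.updateRow_apply, Pi.single_apply]
    rw [h1]; ring
  have hF11 : ((gbar s).updateRow (Sum.inr 1) (Pi.single (Sum.inr 1) 1)).det = 0 := by
    rw [hgbar, det_update_blocks]
    have h1 : ((!![0,(1:ℝ);1,-(s^2*(1-2*m*s))]).updateRow 1 (Pi.single (1:Fin 2) (1:ℝ))).det
        = 0 := by
      rw [Matrix.det_fin_two]
      simp [Matrix.updateRow_apply, Pi.single_apply]
    rw [h1]; ring
  have hdts := hdt s
  have hxb : ∀ i, |xhat i| ≤ 1 := by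
    intro i
    have h1 : xhat i ^2 ≤ 1 := by
      rw [← hxhat]
      exact Finset.single_le_sum (fun j _ => sq_nonneg (xhat j)) (Finset.mem_univ i)
    nlinarith only [sq_abs (xhat i), abs_nonneg (xhat i), h1]
  have hXball : ∀ i a, |X s i a| ≤ K + 2 := by
    intro i a
    rw [hX]
    rcases a with A | k
    · simp only [Sum.elim_inl]
      refine (hc s i A).trans ?_
      nlinarith only [mul_le_mul_of_nonneg_left hs1' hK, hK]
    · simp only [Sum.elim_inr]
      fin_cases k <;>
        simp only [Fin.mk_zero, Fin.mk_one, Fin.isValue, Matrix.cons_val_zero,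
          Matrix.cons_val_one, Matrix.head_cons]
      · rw [abs_mul, abs_neg]
        have h1 : |s^2| ≤ 1 := by
          rw [abs_of_nonneg (by positivity)]
          nlinarith only [hs2le, hs1']
        nlinarith only [mul_le_mul (hxb i) h1 (abs_nonneg _) zero_le_one, hK]
      · rw [abs_mul, abs_neg]
        have h1 : |(1-2*m*s)⁻¹| ≤ 2 := by rw [abs_of_pos hivpos]; exact hivle
        nlinarith only [mul_le_mul (hxb i) h1 (abs_nonneg _) zero_le_one, hK]
  refine ⟨?_, ?_, ?_, ?_⟩
  · -- part 1 : timelike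
    simp only [sum4, het, Sum.elim_inl, Sum.elim_inr, Pi.zero_apply,
      Matrix.cons_val_zero, Matrix.cons_val_one, Matrix.head_cons,
      mul_zero, zero_mul, mul_one, add_zero, zero_add]
    rw [hGs]
    simp only [Matrix.smul_apply, Matrix.add_apply, hgbar,
      Matrix.fromBlocks_apply₂₂, smul_eq_mul,
      Matrix.cons_val_zero, Matrix.cons_val_one, Matrix.head_cons,
      Matrix.cons_val', Matrix.empty_val', Matrix.cons_val_fin_one]
    apply mul_neg_of_pos_of_neg hWpos
    have hent : (!![0,(1:ℝ);1,-(s^2*(1-2*m*s))]) 1 1 = -(s^2*(1-2*m*s)) := by simp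
    rw [hent]
    have h1 := (abs_le.mp (hp s (Sum.inr 1) (Sum.inr 1))).2
    nlinarith only [h1, mul_lt_mul_of_pos_right hKs (show (0:ℝ) < s^2/4 by positivity),
      mul_lt_mul_of_pos_left hh2 (show (0:ℝ) < s^2 by positivity)]
  · -- part 2 : lapse
    have u0 : (0:ℝ) ≤ (s⁻¹)^2 * (1-2*m*s)⁻¹ := by positivity
    have hu2 : (s⁻¹)^2 * (1-2*m*s)⁻¹ ≤ 2*(s⁻¹)^2 := by
      nlinarith only [hivle, sq_nonneg s⁻¹]
    have hsi : s * s⁻¹ = 1 := mul_inv_cancel₀ hsne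
    have hsipos : 0 < s⁻¹ := inv_pos.mpr hs
    have hsi1 : 1 ≤ s⁻¹ := by
      nlinarith only [hsi, hs1', hsipos]
    have hTval : (∑ a, ∑ b, (G s)⁻¹ a b * dt s a * dt s b)
        = (ω s)^2 * (((gbar s + p s).det)⁻¹) *
          ( ((s⁻¹)^2*(1-2*m*s)⁻¹)^2 * (gbar s + p s).adjugate (Sum.inr 0) (Sum.inr 0)
            - ((s⁻¹)^2*(1-2*m*s)⁻¹) * (gbar s + p s).adjugate (Sum.inr 0) (Sum.inr 1)
            - ((s⁻¹)^2*(1-2*m*s)⁻¹) * (gbar s + p s).adjugate (Sum.inr 1) (Sum.inr 0)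
            + (gbar s + p s).adjugate (Sum.inr 1) (Sum.inr 1) ) := by
      simp only [sum4, hGinv, Matrix.smul_apply, smul_eq_mul, hdts,
        Sum.elim_inl, Sum.elim_inr, Pi.zero_apply,
        Matrix.cons_val_zero, Matrix.cons_val_one, Matrix.head_cons,
        mul_zero, zero_mul, mul_one, add_zero, zero_add]
      ring
    have hbr : ((s⁻¹)^2*(1-2*m*s)⁻¹)^2 * (-(s^2*(1-2*m*s)) * σ.det)
        - ((s⁻¹)^2*(1-2*m*s)⁻¹) * (-σ.det)
        - ((s⁻¹)^2*(1-2*m*s)⁻¹) * (-σ.det) + 0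
        = σ.det * ((s⁻¹)^2*(1-2*m*s)⁻¹) := by
      field_simp
      ring
    have hNum : |(((s⁻¹)^2*(1-2*m*s)⁻¹)^2 * (gbar s + p s).adjugate (Sum.inr 0) (Sum.inr 0)
            - ((s⁻¹)^2*(1-2*m*s)⁻¹) * (gbar s + p s).adjugate (Sum.inr 0) (Sum.inr 1)
            - ((s⁻¹)^2*(1-2*m*s)⁻¹) * (gbar s + p s).adjugate (Sum.inr 1) (Sum.inr 0)
            + (gbar s + p s).adjugate (Sum.inr 1) (Sum.inr 1))
          - σ.det * ((s⁻¹)^2*(1-2*m*s)⁻¹)|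
        ≤ C₁*s^3 * (((s⁻¹)^2*(1-2*m*s)⁻¹)^2 + 2*((s⁻¹)^2*(1-2*m*s)⁻¹) + 1) := by
      have e00 := hFdiff 0 0
      have e01 := hFdiff 0 1
      have e10 := hFdiff 1 0
      have e11 := hFdiff 1 1
      rw [hF00] at e00
      rw [hF01] at e01
      rw [hF10] at e10
      rw [hF11] at e11
      set u : ℝ := (s⁻¹)^2*(1-2*m*s)⁻¹ with hudef
      set A00 := (gbar s + p s).adjugate (Sum.inr 0) (Sum.inr 0) with hA00
      set A01 := (gbar s + p s).adjugate (Sum.inr 0) (Sum.inr 1) with hA01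
      set A10 := (gbar s + p s).adjugate (Sum.inr 1) (Sum.inr 0) with hA10
      set A11 := (gbar s + p s).adjugate (Sum.inr 1) (Sum.inr 1) with hA11
      have key : u^2 * A00 - u * A01 - u * A10 + A11 - σ.det * u
          = u^2 * (A00 - (-(s^2*(1-2*m*s)) * σ.det))
            - u * (A01 - (-σ.det)) - u * (A10 - (-σ.det)) + (A11 - 0) := by
        linear_combination hbr
      rw [key]
      have t1 : |u^2 * (A00 - (-(s^2*(1-2*m*s)) * σ.det))| ≤ u^2 * (C₁*s^3) := by
        rw [abs_mul, abs_of_nonneg (sq_nonneg u)]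
        exact mul_le_mul_of_nonneg_left e00 (sq_nonneg u)
      have t2 : |u * (A01 - (-σ.det))| ≤ u * (C₁*s^3) := by
        rw [abs_mul, abs_of_nonneg u0]
        exact mul_le_mul_of_nonneg_left e01 u0
      have t3 : |u * (A10 - (-σ.det))| ≤ u * (C₁*s^3) := by
        rw [abs_mul, abs_of_nonneg u0]
        exact mul_le_mul_of_nonneg_left e10 u0
      have a1 : |u^2 * (A00 - (-(s^2*(1-2*m*s)) * σ.det))
            - u * (A01 - (-σ.det)) - u * (A10 - (-σ.det)) + (A11 - 0)|
          ≤ |u^2 * (A00 - (-(s^2*(1-2*m*s)) * σ.det))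
            - u * (A01 - (-σ.det)) - u * (A10 - (-σ.det))| + |A11 - 0| := abs_add_le _ _
      have a2 : |u^2 * (A00 - (-(s^2*(1-2*m*s)) * σ.det))
            - u * (A01 - (-σ.det)) - u * (A10 - (-σ.det))|
          ≤ |u^2 * (A00 - (-(s^2*(1-2*m*s)) * σ.det)) - u * (A01 - (-σ.det))|
            + |u * (A10 - (-σ.det))| := abs_sub _ _
      have a3 : |u^2 * (A00 - (-(s^2*(1-2*m*s)) * σ.det)) - u * (A01 - (-σ.det))|
          ≤ |u^2 * (A00 - (-(s^2*(1-2*m*s)) * σ.det))| + |u * (A01 - (-σ.det))| :=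
        abs_sub _ _
      linarith only [a1, a2, a3, t1, t2, t3, e11]
    have hsi2 : s^2 * (s⁻¹)^2 = 1 := by
      rw [show s^2 * (s⁻¹)^2 = (s*s⁻¹)^2 by ring, hsi, one_pow]
    have hufacts : ((s⁻¹)^2*(1-2*m*s)⁻¹)^2 + 2*((s⁻¹)^2*(1-2*m*s)⁻¹) + 1 ≤ 9*((s⁻¹)^2)^2 := by
      have h3 : 1 ≤ (s⁻¹)^2 := by nlinarith only [hsi1, hsipos]
      have h4 : (s⁻¹)^2 ≤ ((s⁻¹)^2)^2 := by nlinarith only [h3]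
      have h1 : ((s⁻¹)^2*(1-2*m*s)⁻¹)^2 ≤ 4*((s⁻¹)^2)^2 := by
        nlinarith only [mul_self_le_mul_self u0 hu2]
      nlinarith only [h1, hu2, h3, h4, sq_nonneg s⁻¹]
    have hNumB : |(((s⁻¹)^2*(1-2*m*s)⁻¹)^2 * (gbar s + p s).adjugate (Sum.inr 0) (Sum.inr 0)
            - ((s⁻¹)^2*(1-2*m*s)⁻¹) * (gbar s + p s).adjugate (Sum.inr 0) (Sum.inr 1)
            - ((s⁻¹)^2*(1-2*m*s)⁻¹) * (gbar s + p s).adjugate (Sum.inr 1) (Sum.inr 0)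
            + (gbar s + p s).adjugate (Sum.inr 1) (Sum.inr 1))
          - σ.det * ((s⁻¹)^2*(1-2*m*s)⁻¹)|
        ≤ 9*C₁*s⁻¹ := by
      refine hNum.trans ?_
      have h5 : C₁*s^3 * (((s⁻¹)^2*(1-2*m*s)⁻¹)^2 + 2*((s⁻¹)^2*(1-2*m*s)⁻¹) + 1)
          ≤ C₁*s^3 * (9*((s⁻¹)^2)^2) := by
        exact mul_le_mul_of_nonneg_left hufacts (by positivity)
      refine h5.trans (le_of_eq ?_)
      have h6 : s^3 * ((s⁻¹)^2)^2 = s⁻¹ := by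
        rw [show s^3 * ((s⁻¹)^2)^2 = s⁻¹ * ((s*s⁻¹)*(s*s⁻¹)*(s*s⁻¹)) by ring, hsi]
        ring
      calc C₁*s^3 * (9*((s⁻¹)^2)^2) = 9*C₁*(s^3 * ((s⁻¹)^2)^2) := by ring
        _ = 9*C₁*s⁻¹ := by rw [h6]
    rw [hTval]
    set u : ℝ := (s⁻¹)^2*(1-2*m*s)⁻¹ with hudef
    set Num : ℝ := u^2 * (gbar s + p s).adjugate (Sum.inr 0) (Sum.inr 0)
        - u * (gbar s + p s).adjugate (Sum.inr 0) (Sum.inr 1)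
        - u * (gbar s + p s).adjugate (Sum.inr 1) (Sum.inr 0)
        + (gbar s + p s).adjugate (Sum.inr 1) (Sum.inr 1) with hNumdef
    set Dt : ℝ := (gbar s + p s).det with hDtdef
    have hs2u : s^2 * u = (1-2*m*s)⁻¹ := by
      rw [hudef, show s^2 * ((s⁻¹)^2*(1-2*m*s)⁻¹) = (s^2*(s⁻¹)^2) * (1-2*m*s)⁻¹ by ring,
        hsi2, one_mul]
    have hR : |(ω s)^2 * Num + Dt| ≤ C₂ * s := by
      have hsplit : (ω s)^2 * Num + Dt
          = (ω s)^2 * (Num - σ.det * u)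
            + σ.det * (((ω s)^2 - s^2) * u + (s^2 * u - 1))
            + (Dt + σ.det) := by
        ring
      rw [hsplit]
      have r1 : |(ω s)^2 * (Num - σ.det * u)| ≤ 36 * C₁ * s := by
        rw [abs_mul, abs_of_pos hω2pos]
        calc (ω s)^2 * |Num - σ.det * u| ≤ (4*s^2) * (9*C₁*s⁻¹) :=
              mul_le_mul hω2high hNumB (abs_nonneg _) (by positivity)
          _ = 36 * C₁ * (s * (s * s⁻¹)) := by ring
          _ = 36 * C₁ * s := by rw [hsi, mul_one]
      have r21 : |((ω s)^2 - s^2) * u| ≤ 6*K*s^3 := by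
        rw [abs_mul, abs_of_nonneg u0]
        calc |(ω s)^2 - s^2| * u ≤ (3*K*s^5) * (2*(s⁻¹)^2) :=
              mul_le_mul hω2diff hu2 u0 (by positivity)
          _ = 6*K*(s^3 * (s^2*(s⁻¹)^2)) := by ring
          _ = 6*K*s^3 := by rw [hsi2, mul_one]
      have r22 : |s^2 * u - 1| ≤ 4*m*s := by
        rw [hs2u]
        have h7 : (1-2*m*s)⁻¹ - 1 = 2*m*s*(1-2*m*s)⁻¹ := by
          field_simp
          ring
        rw [h7, abs_of_nonneg (by positivity)]
        nlinarith only [mul_nonneg (mul_nonneg hm.le hs.le) (sub_nonneg.mpr hivle)]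
      have r2' : |((ω s)^2 - s^2) * u + (s^2 * u - 1)| ≤ (4*m+6*K)*s := by
        refine (abs_add_le _ _).trans ?_
        have : 6*K*s^3 ≤ 6*K*s := by
          nlinarith only [mul_le_mul_of_nonneg_left hs3le hK]
        linarith only [r21, r22, this]
      have r2 : |σ.det * (((ω s)^2 - s^2) * u + (s^2 * u - 1))| ≤ σ.det*(4*m+6*K)*s := by
        rw [abs_mul, abs_of_pos hd]
        calc σ.det * |((ω s)^2 - s^2) * u + (s^2 * u - 1)| ≤ σ.det * ((4*m+6*K)*s) :=
              mul_le_mul_of_nonneg_left r2' hd.le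
          _ = σ.det*(4*m+6*K)*s := by ring
      have r3 : |Dt + σ.det| ≤ C₁*s := hdM.trans hs3s
      have a1 : |(ω s)^2 * (Num - σ.det * u)
            + σ.det * (((ω s)^2 - s^2) * u + (s^2 * u - 1)) + (Dt + σ.det)|
          ≤ |(ω s)^2 * (Num - σ.det * u)
            + σ.det * (((ω s)^2 - s^2) * u + (s^2 * u - 1))| + |Dt + σ.det| := abs_add_le _ _
      have a2 : |(ω s)^2 * (Num - σ.det * u)
            + σ.det * (((ω s)^2 - s^2) * u + (s^2 * u - 1))|
          ≤ |(ω s)^2 * (Num - σ.det * u)|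
            + |σ.det * (((ω s)^2 - s^2) * u + (s^2 * u - 1))| := abs_add_le _ _
      have hfin : 36*C₁*s + σ.det*(4*m+6*K)*s + C₁*s = C₂*s := by
        rw [hC₂def]; ring
      linarith only [a1, a2, r1, r2, r3, hfin]
    have hA1 : |(-((ω s)^2 * Dt⁻¹ * Num)) - 1| ≤ C₃ * s := by
      have hid : (-((ω s)^2 * Dt⁻¹ * Num)) - 1 = -(((ω s)^2 * Num + Dt) * Dt⁻¹) := by
        field_simp
        ring
      rw [hid, abs_neg, abs_mul]
      calc |(ω s)^2*Num + Dt| * |Dt⁻¹| ≤ (C₂*s) * (2/σ.det) :=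
            mul_le_mul hR hdMinv (abs_nonneg _) (by positivity)
        _ = C₃ * s := by rw [hC₃def]; field_simp
    have hC3s' : C₃ * s ≤ 1/2 := hC3s
    have hA2 : 1/2 ≤ -((ω s)^2 * Dt⁻¹ * Num) := by
      have h8 := (abs_le.mp hA1).1
      linarith only [h8, hC3s']
    have hA3 : -((ω s)^2 * Dt⁻¹ * Num) ≤ 3/2 := by
      have h8 := (abs_le.mp hA1).2
      linarith only [h8, hC3s']
    calc |(Real.sqrt (-((ω s)^2 * Dt⁻¹ * Num)))⁻¹ - 1|
        ≤ |(-((ω s)^2 * Dt⁻¹ * Num)) - 1| := inv_sqrt_close hA2 hA3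
      _ ≤ C₃ * s := hA1
      _ ≤ (C₃ + C₄ + C₅ + 1)*s := by
          nlinarith only [hC₄, hC₅, hs, mul_pos hC₄ hs, mul_pos hC₅ hs]
  · -- part 3 : shift
    intro i
    have hXi := hX s i
    have key3 : (∑ a, ∑ b, G s a b * et a * X s i b)
        = ((ω s)^2)⁻¹ * (p s (Sum.inr 1) (Sum.inl 0) * c s i 0
          + p s (Sum.inr 1) (Sum.inl 1) * c s i 1
          + p s (Sum.inr 1) (Sum.inr 0) * (-(xhat i) * s^2)
          + p s (Sum.inr 1) (Sum.inr 1) * (-(xhat i) * (1-2*m*s)⁻¹)) := by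
      simp only [sum4, het, hXi, hGs, Matrix.smul_apply, Matrix.add_apply, hgbar,
        smul_eq_mul, Sum.elim_inl, Sum.elim_inr, Pi.zero_apply,
        Matrix.cons_val_zero, Matrix.cons_val_one, Matrix.head_cons,
        Matrix.fromBlocks_apply₁₁, Matrix.fromBlocks_apply₁₂,
        Matrix.fromBlocks_apply₂₁, Matrix.fromBlocks_apply₂₂, Matrix.zero_apply,
        Matrix.cons_val', Matrix.empty_val', Matrix.cons_val_fin_one, Matrix.of_apply,
        mul_zero, zero_mul, mul_one, add_zero, zero_add]
      field_simp
      have hh' : (1 - s*m*2)⁻¹ * (1 - s*m*2) = 1 := inv_mul_cancel₀ (ne_of_gt (by linarith only [hhpos]))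
      linear_combination (xhat i * s^2) * hh'
    rw [key3]
    have hc0 : |c s i 0| ≤ K := (hc s i 0).trans (by nlinarith only [mul_le_mul_of_nonneg_left hs1' hK])
    have hc1 : |c s i 1| ≤ K := (hc s i 1).trans (by nlinarith only [mul_le_mul_of_nonneg_left hs1' hK])
    have t1 : |p s (Sum.inr 1) (Sum.inl 0) * c s i 0| ≤ K*s^3*K :=
      abs_mul_le (hp s _ _) hc0
    have t2 : |p s (Sum.inr 1) (Sum.inl 1) * c s i 1| ≤ K*s^3*K :=
      abs_mul_le (hp s _ _) hc1
    have hx2 : |(-(xhat i) * s^2)| ≤ 1 := by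
      rw [abs_mul, abs_neg]
      have h1 : |s^2| ≤ 1 := by
        rw [abs_of_nonneg (by positivity)]
        nlinarith only [hs2le, hs1']
      nlinarith only [mul_le_mul (hxb i) h1 (abs_nonneg _) zero_le_one]
    have hx3 : |(-(xhat i) * (1-2*m*s)⁻¹)| ≤ 2 := by
      rw [abs_mul, abs_neg]
      have h1 : |(1-2*m*s)⁻¹| ≤ 2 := by rw [abs_of_pos hivpos]; exact hivle
      nlinarith only [mul_le_mul (hxb i) h1 (abs_nonneg _) zero_le_one]
    have t3 : |p s (Sum.inr 1) (Sum.inr 0) * (-(xhat i) * s^2)| ≤ K*s^3*1 :=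
      abs_mul_le (hp s _ _) hx2
    have t4 : |p s (Sum.inr 1) (Sum.inr 1) * (-(xhat i) * (1-2*m*s)⁻¹)| ≤ K*s^3*2 :=
      abs_mul_le (hp s _ _) hx3
    have hinner : |p s (Sum.inr 1) (Sum.inl 0) * c s i 0
          + p s (Sum.inr 1) (Sum.inl 1) * c s i 1
          + p s (Sum.inr 1) (Sum.inr 0) * (-(xhat i) * s^2)
          + p s (Sum.inr 1) (Sum.inr 1) * (-(xhat i) * (1-2*m*s)⁻¹)|
        ≤ K*s^3*(2*K+3) := by
      have a1 := abs_add_le (p s (Sum.inr 1) (Sum.inl 0) * c s i 0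
          + p s (Sum.inr 1) (Sum.inl 1) * c s i 1
          + p s (Sum.inr 1) (Sum.inr 0) * (-(xhat i) * s^2))
        (p s (Sum.inr 1) (Sum.inr 1) * (-(xhat i) * (1-2*m*s)⁻¹))
      have a2 := abs_add_le (p s (Sum.inr 1) (Sum.inl 0) * c s i 0
          + p s (Sum.inr 1) (Sum.inl 1) * c s i 1)
        (p s (Sum.inr 1) (Sum.inr 0) * (-(xhat i) * s^2))
      have a3 := abs_add_le (p s (Sum.inr 1) (Sum.inl 0) * c s i 0)
        (p s (Sum.inr 1) (Sum.inl 1) * c s i 1)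
      linarith only [a1, a2, a3, t1, t2, t3, t4]
    have hsi : s * s⁻¹ = 1 := mul_inv_cancel₀ hsne
    rw [abs_mul, abs_of_pos hWpos]
    calc ((ω s)^2)⁻¹ * |p s (Sum.inr 1) (Sum.inl 0) * c s i 0
          + p s (Sum.inr 1) (Sum.inl 1) * c s i 1
          + p s (Sum.inr 1) (Sum.inr 0) * (-(xhat i) * s^2)
          + p s (Sum.inr 1) (Sum.inr 1) * (-(xhat i) * (1-2*m*s)⁻¹)|
        ≤ (4/s^2) * (K*s^3*(2*K+3)) :=
          mul_le_mul hW hinner (abs_nonneg _) (by positivity)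
      _ = 4*K*(2*K+3)*s := by
          field_simp
      _ ≤ (C₃ + C₄ + C₅ + 1)*s := by
          have h9 : 4*K*(2*K+3) ≤ C₅ := by rw [hC₅def]; linarith only []
          nlinarith only [h9, hs, hC₃, hC₄, mul_pos hC₃ hs, mul_pos hC₄ hs,
            mul_le_mul_of_nonneg_right h9 hs.le]
  · -- part 4 : induced metric
    intro i j
    have hXi := hX s i
    have hXj := hX s j
    have hch0 := hchart s i j hs
    have hch : (∑ A, ∑ B, σ A B * c s i A * c s j B)
        = ((if i = j then 1 else 0) - xhat i * xhat j) * s^2 := by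
      have h2 : ((s:ℝ)⁻¹)^2 = (s^2)⁻¹ := by rw [← inv_pow]
      rw [h2] at hch0
      have h3 := congrArg (fun x => x * s^2) hch0
      rw [add_mul, mul_assoc, inv_mul_cancel₀ (by positivity : (s:ℝ)^2 ≠ 0), mul_one] at h3
      linarith only [h3]
    have key4 : (∑ a, ∑ b, G s a b * X s i a * X s j b)
        = ((ω s)^2)⁻¹ * ( (∑ A, ∑ B, σ A B * c s i A * c s j B)
          + (xhat i * xhat j) * s^2 * (1-2*m*s)⁻¹
          + (∑ a, ∑ b, p s a b * X s i a * X s j b) ) := by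
      simp only [sum4, hXi, hXj, hGs, Matrix.smul_apply, Matrix.add_apply, hgbar,
        smul_eq_mul, Sum.elim_inl, Sum.elim_inr, Pi.zero_apply,
        Matrix.cons_val_zero, Matrix.cons_val_one, Matrix.head_cons,
        Matrix.fromBlocks_apply₁₁, Matrix.fromBlocks_apply₁₂,
        Matrix.fromBlocks_apply₂₁, Matrix.fromBlocks_apply₂₂, Matrix.zero_apply,
        Matrix.cons_val', Matrix.empty_val', Matrix.cons_val_fin_one, Matrix.of_apply,
        Fin.sum_univ_two, mul_zero, zero_mul, mul_one, one_mul, add_zero, zero_add]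
      field_simp
      ring
    have hterm : ∀ a b, |p s a b * X s i a * X s j b| ≤ K*s^3*(K+2)*(K+2) :=
      fun a b => abs_mul_le (abs_mul_le (hp s a b) (hXball i a)) (hXball j b)
    have hcard4 : (Finset.univ : Finset (Fin 2 ⊕ Fin 2)).card = 4 := by
      simp [Fintype.card_sum]
    have hPsum : |∑ a, ∑ b, p s a b * X s i a * X s j b|
        ≤ 16*(K*s^3*(K+2)*(K+2)) := by
      have hin : ∀ a, |∑ b, p s a b * X s i a * X s j b|
          ≤ 4*(K*s^3*(K+2)*(K+2)) := by
        intro a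
        refine (Finset.abs_sum_le_sum_abs _ _).trans ?_
        refine (Finset.sum_le_card_nsmul _ _ _ (fun b _ => hterm a b)).trans ?_
        rw [hcard4, nsmul_eq_mul]
        norm_num
      refine (Finset.abs_sum_le_sum_abs _ _).trans ?_
      refine (Finset.sum_le_card_nsmul _ _ _ (fun a _ => hin a)).trans ?_
      rw [hcard4, nsmul_eq_mul]
      norm_num
      exact le_of_eq (by ring)
    have hiden : (∑ a, ∑ b, G s a b * X s i a * X s j b) - (if i = j then 1 else 0)
        = (if i = j then 1 else 0)*(((ω s)^2)⁻¹*s^2 - 1)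
          + (((ω s)^2)⁻¹*s^2)*(xhat i*xhat j)*((1-2*m*s)⁻¹ - 1)
          + ((ω s)^2)⁻¹ * (∑ a, ∑ b, p s a b * X s i a * X s j b) := by
      rw [key4, hch]
      ring
    rw [hiden]
    have b1 : |((ω s)^2)⁻¹*s^2 - 1| ≤ 12*K*s := by
      have hidW : ((ω s)^2)⁻¹*s^2 - 1 = (s^2 - (ω s)^2) * ((ω s)^2)⁻¹ := by
        field_simp
      rw [hidW, abs_mul, abs_of_pos hWpos]
      have h10 : |s^2 - (ω s)^2| ≤ 3*K*s^5 := by rw [abs_sub_comm]; exact hω2diff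
      have hsi : s * s⁻¹ = 1 := mul_inv_cancel₀ hsne
      calc |s^2-(ω s)^2| * ((ω s)^2)⁻¹ ≤ (3*K*s^5)*(4/s^2) :=
            mul_le_mul h10 hW hWpos.le (by positivity)
        _ = 12*K*s^3 := by
            field_simp
            ring
        _ ≤ 12*K*s := by
            nlinarith only [mul_le_mul_of_nonneg_left hs3le hK]
    have b2 : |((ω s)^2)⁻¹*s^2| ≤ 4 := by
      rw [abs_of_pos (mul_pos hWpos (by positivity))]
      calc ((ω s)^2)⁻¹*s^2 ≤ (4/s^2)*s^2 :=
            mul_le_mul_of_nonneg_right hW (sq_nonneg s)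
        _ = 4 := by field_simp
    have b3 : |(1-2*m*s)⁻¹ - 1| ≤ 4*m*s := by
      have h7 : (1-2*m*s)⁻¹ - 1 = 2*m*s*(1-2*m*s)⁻¹ := by field_simp; ring
      rw [h7, abs_of_nonneg (by positivity)]
      nlinarith only [mul_nonneg (mul_nonneg hm.le hs.le) (sub_nonneg.mpr hivle)]
    have b4 : |(if i = j then (1:ℝ) else 0)| ≤ 1 := by
      split_ifs <;> norm_num
    have hxx : |xhat i * xhat j| ≤ 1 := by
      have := abs_mul_le (hxb i) (hxb j)
      linarith only [this]
    have u1 : |(if i = j then (1:ℝ) else 0)*(((ω s)^2)⁻¹*s^2 - 1)| ≤ 1*(12*K*s) :=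
      abs_mul_le b4 b1
    have u2 : |(((ω s)^2)⁻¹*s^2)*(xhat i*xhat j)*((1-2*m*s)⁻¹ - 1)| ≤ 4*1*(4*m*s) :=
      abs_mul_le (abs_mul_le b2 hxx) b3
    have u3 : |((ω s)^2)⁻¹ * (∑ a, ∑ b, p s a b * X s i a * X s j b)|
        ≤ (4/s^2) * (16*(K*s^3*(K+2)*(K+2))) := by
      refine abs_mul_le ?_ hPsum
      rw [abs_of_pos hWpos]
      exact hW
    have u3' : (4/s^2) * (16*(K*s^3*(K+2)*(K+2))) = 64*K*(K+2)^2*s := by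
      field_simp
      ring
    rw [u3'] at u3
    have a1 := abs_add_le ((if i = j then (1:ℝ) else 0)*(((ω s)^2)⁻¹*s^2 - 1)
        + (((ω s)^2)⁻¹*s^2)*(xhat i*xhat j)*((1-2*m*s)⁻¹ - 1))
      (((ω s)^2)⁻¹ * (∑ a, ∑ b, p s a b * X s i a * X s j b))
    have a2 := abs_add_le ((if i = j then (1:ℝ) else 0)*(((ω s)^2)⁻¹*s^2 - 1))
      ((((ω s)^2)⁻¹*s^2)*(xhat i*xhat j)*((1-2*m*s)⁻¹ - 1))
    have hfin : 1*(12*K*s) + 4*1*(4*m*s) + 64*K*(K+2)^2*s ≤ (C₃ + C₄ + C₅ + 1)*s := by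
      rw [hC₄def, hC₅def]
      nlinarith only [hs, hC₃, mul_pos hC₃ hs, mul_nonneg (mul_nonneg (by linarith only [hK] : (0:ℝ) ≤ 4*K) (by nlinarith only [hK] : (0:ℝ) ≤ 2*K+3)) hs.le]
    linarith only [a1, a2, u1, u2, u3, hfin]
end
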